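/- We have 1/τ = - ∑_{k=1}^{∞} (μ(k)/k) · log(1 - 1/τ^k), where τ = (1 + √5)/2 is the golden ratio. -/

import Mathlib

open Real

private lemma aux_moebius_log {x : ℝ} (hx0 : 0 < x) (hx1 : x < 1) :
    HasSum (fun k : ℕ => ((ArithmeticFunction.moebius (k + 1) : ℝ) / (k + 1 : ℝ)) *
      (-Real.log (1 - x ^ (k + 1)))) x := by
  classical
  set f : ℕ × ℕ → ℝ := fun p =>
    ((ArithmeticFunction.moebius (p.1 + 1) : ℝ) / ((p.1 : ℝ) + 1)) *
      ((x ^ (p.1 + 1)) ^ (p.2 + 1) / ((p.2 : ℝ) + 1)) with hf_def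
  -- summability of f
  have hgeo : Summable (fun n : ℕ => x ^ n) := summable_geometric_of_lt_one hx0.le hx1
  have hg : Summable (fun p : ℕ × ℕ => x * (x ^ p.1 * x ^ p.2)) :=
    ((hgeo.mul_of_nonneg hgeo (fun _ => by positivity) (fun _ => by positivity)).mul_left x)
  have hbound : ∀ p : ℕ × ℕ, ‖f p‖ ≤ x * (x ^ p.1 * x ^ p.2) := by
    rintro ⟨k, n⟩
    have hμ : |(ArithmeticFunction.moebius (k + 1) : ℝ)| ≤ 1 := by
      exact_mod_cast (ArithmeticFunction.abs_moebius_le_one (n := k + 1))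
    have e1 : |(ArithmeticFunction.moebius (k + 1) : ℝ) / ((k : ℝ) + 1)| ≤ 1 := by
      rw [abs_div, abs_of_nonneg (by positivity : (0:ℝ) ≤ (k : ℝ) + 1)]
      apply div_le_one_of_le₀ (hμ.trans (by linarith [Nat.cast_nonneg (α := ℝ) k])) (by positivity)
    have e2 : |(x ^ (k + 1)) ^ (n + 1) / ((n : ℝ) + 1)| ≤ (x ^ (k + 1)) ^ (n + 1) := by
      rw [abs_div, abs_of_nonneg (by positivity : (0:ℝ) ≤ (x ^ (k+1)) ^ (n+1)),
        abs_of_nonneg (by positivity : (0:ℝ) ≤ (n : ℝ) + 1)]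
      exact div_le_self (by positivity) (by linarith [Nat.cast_nonneg (α := ℝ) n])
    have h1 : ‖f (k, n)‖ ≤ (x ^ (k + 1)) ^ (n + 1) := by
      rw [hf_def]
      simp only [Real.norm_eq_abs, abs_mul]
      calc |(ArithmeticFunction.moebius (k + 1) : ℝ) / ((k : ℝ) + 1)| *
            |(x ^ (k + 1)) ^ (n + 1) / ((n : ℝ) + 1)|
          ≤ 1 * ((x ^ (k + 1)) ^ (n + 1)) :=
            mul_le_mul e1 e2 (abs_nonneg _) one_pos.le
        _ = (x ^ (k + 1)) ^ (n + 1) := one_mul _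
    have h2 : (x ^ (k + 1)) ^ (n + 1) ≤ x * (x ^ k * x ^ n) := by
      rw [← pow_mul]
      have hle : k + n + 1 ≤ (k + 1) * (n + 1) := by nlinarith
      calc x ^ ((k + 1) * (n + 1)) ≤ x ^ (k + n + 1) :=
            pow_le_pow_of_le_one hx0.le hx1.le hle
        _ = x * (x ^ k * x ^ n) := by ring
    exact h1.trans h2
  have hf : Summable f := Summable.of_norm_bounded hg hbound
  -- row sums give the claimed series
  have hrow : ∀ k : ℕ, HasSum (fun n => f (k, n))
      (((ArithmeticFunction.moebius (k + 1) : ℝ) / (k + 1 : ℝ)) *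
        (-Real.log (1 - x ^ (k + 1)))) := by
    intro k
    have hxk : |x ^ (k + 1)| < 1 := by
      rw [abs_of_nonneg (by positivity)]
      exact pow_lt_one₀ hx0.le hx1 (Nat.succ_ne_zero k)
    exact (hasSum_pow_div_log_of_abs_lt_one hxk).mul_left _
  have hS : HasSum f (∑' p, f p) := hf.hasSum
  -- equiv between sigma of divisorsAntidiagonal and ℕ × ℕ
  have hmemE : ∀ p : ℕ × ℕ,
      (p.1 + 1, p.2 + 1) ∈ Nat.divisorsAntidiagonal ((p.1 + 1) * (p.2 + 1) - 1 + 1) := by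
    intro p
    rw [Nat.mem_divisorsAntidiagonal]
    have h1 : 1 ≤ (p.1 + 1) * (p.2 + 1) := Nat.one_le_iff_ne_zero.2 (by positivity)
    refine ⟨?_, by omega⟩
    show (p.1 + 1) * (p.2 + 1) = (p.1 + 1) * (p.2 + 1) - 1 + 1
    omega
  let E : (Σ m : ℕ, {p : ℕ × ℕ // p ∈ Nat.divisorsAntidiagonal (m + 1)}) ≃ ℕ × ℕ :=
    { toFun := fun q => (q.2.1.1 - 1, q.2.1.2 - 1)
      invFun := fun p => ⟨(p.1 + 1) * (p.2 + 1) - 1, ⟨(p.1 + 1, p.2 + 1), hmemE p⟩⟩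
      left_inv := by
        rintro ⟨m, ⟨⟨a, b⟩, h⟩⟩
        have h' := Nat.mem_divisorsAntidiagonal.mp h
        have hab : a * b = m + 1 := h'.1
        have ha : a ≠ 0 := by rintro rfl; simp at hab
        have hb : b ≠ 0 := by rintro rfl; simp at hab
        have ha1 : a - 1 + 1 = a := by omega
        have hb1 : b - 1 + 1 = b := by omega
        refine Sigma.subtype_ext ?_ ?_
        · show (a - 1 + 1) * (b - 1 + 1) - 1 = m
          rw [ha1, hb1, hab]
          omega
        · show ((a - 1 + 1, b - 1 + 1) : ℕ × ℕ) = (a, b)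
          rw [ha1, hb1]
      right_inv := by
        rintro ⟨k, n⟩
        show ((k + 1 - 1 : ℕ), (n + 1 - 1 : ℕ)) = (k, n)
        simp }
  have hE : HasSum (f ∘ E) (∑' p, f p) := E.hasSum_iff.2 hS
  -- inner sums
  have hinner : ∀ m : ℕ, HasSum (fun p : {p : ℕ × ℕ // p ∈ Nat.divisorsAntidiagonal (m + 1)} =>
      (f ∘ E) ⟨m, p⟩) (if m = 0 then x else 0) := by
    intro m
    have hsum := hasSum_fintype (fun p : {p : ℕ × ℕ // p ∈ Nat.divisorsAntidiagonal (m + 1)} =>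
      (f ∘ E) ⟨m, p⟩)
    have key : (∑ p : {p : ℕ × ℕ // p ∈ Nat.divisorsAntidiagonal (m + 1)}, (f ∘ E) ⟨m, p⟩)
        = (if m = 0 then x else 0) := by
      have e0 : (∑ p : {p : ℕ × ℕ // p ∈ Nat.divisorsAntidiagonal (m + 1)}, (f ∘ E) ⟨m, p⟩)
          = ∑ p ∈ Nat.divisorsAntidiagonal (m + 1), f (p.1 - 1, p.2 - 1) := by
        rw [← Finset.sum_coe_sort (Nat.divisorsAntidiagonal (m + 1))
          (fun p => f (p.1 - 1, p.2 - 1))]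
        rfl
      rw [e0]
      have hcongr : ∀ p ∈ Nat.divisorsAntidiagonal (m + 1),
          f (p.1 - 1, p.2 - 1) = (ArithmeticFunction.moebius p.1 : ℝ) * (x ^ (m + 1) / (m + 1)) := by
        rintro ⟨a, b⟩ hp
        rw [Nat.mem_divisorsAntidiagonal] at hp
        obtain ⟨hab, -⟩ := hp
        have ha : 0 < a := Nat.pos_of_ne_zero (by rintro rfl; simp at hab)
        have hb : 0 < b := Nat.pos_of_ne_zero (by rintro rfl; simp at hab)
        have ha1 : a - 1 + 1 = a := by omega
        have hb1 : b - 1 + 1 = b := by omega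
        have hca : ((a - 1 : ℕ) : ℝ) + 1 = (a : ℝ) := by
          exact_mod_cast congrArg (fun n : ℕ => (n : ℝ)) ha1
        have hcb : ((b - 1 : ℕ) : ℝ) + 1 = (b : ℝ) := by
          exact_mod_cast congrArg (fun n : ℕ => (n : ℝ)) hb1
        rw [hf_def]
        simp only [ha1, hb1, hca, hcb]
        rw [← pow_mul, hab]
        have hma : ((m : ℝ) + 1) = (a : ℝ) * (b : ℝ) := by
          exact_mod_cast congrArg (fun n : ℕ => (n : ℝ)) hab.symm
        rw [div_mul_div_comm, hma]
        ring
      rw [Finset.sum_congr rfl hcongr, ← Finset.sum_mul]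
      have hdiv : ∑ p ∈ Nat.divisorsAntidiagonal (m + 1), (ArithmeticFunction.moebius p.1 : ℝ) =
          (((ArithmeticFunction.moebius * ArithmeticFunction.zeta :
            ArithmeticFunction ℤ) (m + 1) : ℤ) : ℝ) := by
        rw [ArithmeticFunction.coe_mul_zeta_apply]
        push_cast
        rw [Nat.sum_divisorsAntidiagonal (fun a _ => (ArithmeticFunction.moebius a : ℝ))]
      rw [hdiv, ArithmeticFunction.moebius_mul_coe_zeta]
      rcases Nat.eq_zero_or_pos m with rfl | hm
      · simp
      · rw [ArithmeticFunction.one_apply_ne (by omega : m + 1 ≠ 1)]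
        simp only [Int.cast_zero, zero_mul]
        rw [if_neg (by omega)]
    exact key ▸ hsum
  have hx' : HasSum (fun m : ℕ => if m = 0 then x else 0) (∑' p, f p) := hE.sigma hinner
  have hxval : (∑' p, f p) = x := hx'.unique (hasSum_ite_eq 0 x)
  have hfinal := hS.prod_fiberwise hrow
  rwa [hxval] at hfinal

/-- 1/τ = -∑_{k=1}^∞ (μ(k)/k) log(1 - 1/τ^k), where τ = (1+√5)/2. -/
theorem golden_moebius_series :
    1 / ((1 + Real.sqrt 5) / 2) =
      -∑' k : ℕ, ((ArithmeticFunction.moebius (k + 1) : ℝ) / (k + 1 : ℝ)) *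
        Real.log (1 - 1 / ((1 + Real.sqrt 5) / 2) ^ (k + 1)) := by
  set τ : ℝ := (1 + Real.sqrt 5) / 2 with hτ
  have h5 : (1:ℝ) < Real.sqrt 5 := by
    rw [show (1:ℝ) = Real.sqrt 1 by rw [Real.sqrt_one]]
    exact Real.sqrt_lt_sqrt (by norm_num) (by norm_num)
  have hτ1 : 1 < τ := by rw [hτ]; linarith
  have hx0 : 0 < 1 / τ := by positivity
  have hx1 : 1 / τ < 1 := by
    rw [div_lt_one (by linarith)]; linarith
  have h := aux_moebius_log hx0 hx1
  have hpow : ∀ k : ℕ, (1 / τ) ^ (k + 1) = 1 / τ ^ (k + 1) := fun k => one_div_pow τ (k + 1)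
  have h' : HasSum (fun k : ℕ => -(((ArithmeticFunction.moebius (k + 1) : ℝ) / (k + 1 : ℝ)) *
      Real.log (1 - 1 / τ ^ (k + 1)))) (1 / τ) := by
    convert h using 2 with k
    rw [hpow k]
    ring
  rw [← h'.tsum_eq, tsum_neg]
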